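/- In the symmetric group S₈, the permutations σ₁ = (1 2 3 4 5), σ₂ = (3 6 8 5 4), σ₃ = (1 5 4 7 2), σ₄ = (2 7 4 8 6) each have cycle structure [1,1,1,5], satisfy σ₁·σ₂·σ₃·σ₄ = identity, and the subgroup they generate acts transitively on {1,…,8}. Hence there exists a transitive product-one tuple in S₈ of length 4 with ramification type [[1³,5]⁴]. -/

import Mathlib

/-- Cycle structure of a permutation of `Fin d`, including fixed points as 1-cycles. -/
def fullCycleType {d : ℕ} (σ : Equiv.Perm (Fin d)) : Multiset ℕ :=
  σ.cycleType + Multiset.replicate (d - σ.cycleType.sum) 1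

/-- Product of a list of permutations, composed left-to-right
(apply the first permutation first). -/
def seqProd {d : ℕ} (l : List (Equiv.Perm (Fin d))) : Equiv.Perm (Fin d) :=
  l.foldr (fun σ acc => σ.trans acc) (Equiv.refl (Fin d))


def σ1 : Equiv.Perm (Fin 8) := c[0, 1, 2, 3, 4]

def σ2 : Equiv.Perm (Fin 8) := c[2, 5, 7, 4, 3]

def σ3 : Equiv.Perm (Fin 8) := c[0, 4, 3, 6, 1]

def σ4 : Equiv.Perm (Fin 8) := c[1, 6, 3, 7, 5]

lemma fct_of_cycle (σ : Equiv.Perm (Fin 8)) (h : σ.IsCycle) (hs : σ.support.card = 5) :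
    fullCycleType σ = ({1, 1, 1, 5} : Multiset ℕ) := by
  unfold fullCycleType
  rw [h.cycleType, hs]
  decide

lemma fct1 : fullCycleType σ1 = ({1, 1, 1, 5} : Multiset ℕ) :=
  fct_of_cycle _ (Cycle.isCycle_formPerm _ _
    (by rw [Cycle.nontrivial_coe_nodup_iff (by decide)]; decide)) (by decide)

lemma fct2 : fullCycleType σ2 = ({1, 1, 1, 5} : Multiset ℕ) :=
  fct_of_cycle _ (Cycle.isCycle_formPerm _ _
    (by rw [Cycle.nontrivial_coe_nodup_iff (by decide)]; decide)) (by decide)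

lemma fct3 : fullCycleType σ3 = ({1, 1, 1, 5} : Multiset ℕ) :=
  fct_of_cycle _ (Cycle.isCycle_formPerm _ _
    (by rw [Cycle.nontrivial_coe_nodup_iff (by decide)]; decide)) (by decide)

lemma fct4 : fullCycleType σ4 = ({1, 1, 1, 5} : Multiset ℕ) :=
  fct_of_cycle _ (Cycle.isCycle_formPerm _ _
    (by rw [Cycle.nontrivial_coe_nodup_iff (by decide)]; decide)) (by decide)

/-- Witness words taking 0 to each point. -/
def w : Fin 8 → Equiv.Perm (Fin 8) :=
  ![1, σ1, σ1^2, σ1^3, σ1^4, σ2 * σ1^2, σ3 * σ1^3, σ2^2 * σ1^2]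

lemma w_zero : ∀ x : Fin 8, w x 0 = x := by decide

lemma w_mem {S : Set (Equiv.Perm (Fin 8))} (h1 : σ1 ∈ S) (h2 : σ2 ∈ S) (h3 : σ3 ∈ S) :
    ∀ x : Fin 8, w x ∈ Subgroup.closure S := by
  have m1 := Subgroup.subset_closure (k := S) h1
  have m2 := Subgroup.subset_closure (k := S) h2
  have m3 := Subgroup.subset_closure (k := S) h3
  intro x
  fin_cases x
  · exact one_mem _
  · exact m1
  · exact pow_mem m1 2
  · exact pow_mem m1 3
  · exact pow_mem m1 4
  · exact mul_mem m2 (pow_mem m1 2)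
  · exact mul_mem m3 (pow_mem m1 3)
  · exact mul_mem (pow_mem m2 2) (pow_mem m1 2)

lemma transitivity_aux {S : Set (Equiv.Perm (Fin 8))} (h1 : σ1 ∈ S) (h2 : σ2 ∈ S) (h3 : σ3 ∈ S) :
    ∀ x y : Fin 8, ∃ g ∈ Subgroup.closure S, g x = y := by
  intro x y
  refine ⟨w y * (w x)⁻¹, mul_mem (w_mem h1 h2 h3 y) (inv_mem (w_mem h1 h2 h3 x)), ?_⟩
  have : (w x)⁻¹ x = 0 := by
    have h : (w x)⁻¹ (w x 0) = 0 := Equiv.symm_apply_apply (w x) 0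
    rwa [w_zero x] at h
  show w y ((w x)⁻¹ x) = y
  rw [this, w_zero]

theorem stmt11 :
    (fullCycleType σ1 = ({1, 1, 1, 5} : Multiset ℕ) ∧ fullCycleType σ2 = ({1, 1, 1, 5} : Multiset ℕ) ∧ fullCycleType σ3 = ({1, 1, 1, 5} : Multiset ℕ) ∧ fullCycleType σ4 = ({1, 1, 1, 5} : Multiset ℕ)) ∧
    seqProd [σ1, σ2, σ3, σ4] = Equiv.refl (Fin 8) ∧
    (∀ x y : Fin 8, ∃ g ∈ Subgroup.closure ({σ1, σ2, σ3, σ4} : Set (Equiv.Perm (Fin 8))), g x = y) ∧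
    (∃ τ : Fin 4 → Equiv.Perm (Fin 8),
      (∀ i, fullCycleType (τ i) = ({1, 1, 1, 5} : Multiset ℕ)) ∧
      seqProd (List.ofFn τ) = Equiv.refl (Fin 8) ∧
      (∀ x y : Fin 8, ∃ g ∈ Subgroup.closure (Set.range τ), g x = y)) := by
  refine ⟨⟨fct1, fct2, fct3, fct4⟩, by decide, ?_, ?_⟩
  · exact transitivity_aux (Set.mem_insert _ _) (Set.mem_insert_of_mem _ (Set.mem_insert _ _)) (Set.mem_insert_of_mem _ (Set.mem_insert_of_mem _ (Set.mem_insert _ _)))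
  · refine ⟨![σ1, σ2, σ3, σ4], ?_, ?_, ?_⟩
    · intro i; fin_cases i
      exacts [fct1, fct2, fct3, fct4]
    · show seqProd [σ1, σ2, σ3, σ4] = _; decide
    · exact transitivity_aux ⟨0, rfl⟩ ⟨1, rfl⟩ ⟨2, rfl⟩
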